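/- Let ρ be a separable state on ℋ_A ⊗ ℋ_B and let ρ_A = tr_B ρ. Then ‖ρ − ρ_A ⊗ 𝕀_B/d‖₁ ≤ 2(d−1)/d. -/

import Mathlib

open Matrix MeasureTheory
open scoped Kronecker BigOperators ENNReal ComplexOrder

noncomputable section

namespace SepPaper

/-- The rank-one operator `|ψ⟩⟨ψ|`. -/
def proj {n : Type*} (ψ : n → ℂ) : Matrix n n ℂ := Matrix.vecMulVec ψ (star ψ)

/-- `Λ` is a separable operator on `ℂ^{dA} ⊗ ℂ^{d}`: a finite conical combination of
pure product operators `|ψ⟩⟨ψ| ⊗ |φ⟩⟨φ|`. -/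
def IsSeparable (dA d : ℕ) (Λ : Matrix (Fin dA × Fin d) (Fin dA × Fin d) ℂ) : Prop :=
  ∃ (k : ℕ) (c : Fin k → ℝ) (ψ : Fin k → (Fin dA → ℂ)) (φ : Fin k → (Fin d → ℂ)),
    (∀ i, 0 ≤ c i) ∧
    Λ = ∑ i, (c i : ℂ) • (proj (ψ i) ⊗ₖ proj (φ i))

/-- Partial trace over the `B` system. -/
def trB {dA d : ℕ} (M : Matrix (Fin dA × Fin d) (Fin dA × Fin d) ℂ) :
    Matrix (Fin dA) (Fin dA) ℂ :=
  fun a a' => ∑ b : Fin d, M (a, b) (a', b)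

/-- Index type of `ℋ_A ⊗ ℋ_B ⊗ ℋ_B^{⊗(N-1)} = ℋ_A ⊗ ℋ_B^{⊗N}` (for `N ≥ 1`). -/
abbrev ExtIdx (dA d N : ℕ) := Fin dA × Fin d × (Fin (N - 1) → Fin d)

/-- The orthogonal projector onto the symmetric subspace of `(ℂ^d)^{⊗N}`,
realized as the average of all permutation operators. -/
def symProj (d N : ℕ) : Matrix (Fin N → Fin d) (Fin N → Fin d) ℂ :=
  (N.factorial : ℂ)⁻¹ •
    ∑ π : Equiv.Perm (Fin N), Matrix.of (fun f g => if (fun i => g (π i)) = f then (1 : ℂ) else 0)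

/-- Identification of `ℂ^d ⊗ (ℂ^d)^{⊗(N-1)}` with `(ℂ^d)^{⊗((N-1)+1)}`. -/
def bEquiv (d N : ℕ) : (Fin d × (Fin (N - 1) → Fin d)) ≃ (Fin (N - 1 + 1) → Fin d) :=
  Fin.consEquiv (fun _ => Fin d)

/-- The symmetric projector on the `N = (N-1)+1` copies of `ℂ^d`,
viewed on the index type `Fin d × (Fin (N-1) → Fin d)`. -/
def symProjB (d N : ℕ) : Matrix (Fin d × (Fin (N - 1) → Fin d)) (Fin d × (Fin (N - 1) → Fin d)) ℂ :=
  Matrix.reindex (bEquiv d N).symm (bEquiv d N).symm (symProj d (N - 1 + 1))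

/-- Partial trace over the last `N-1` copies of `ℋ_B`. -/
def ptraceExt {dA d N : ℕ} (M : Matrix (ExtIdx dA d N) (ExtIdx dA d N) ℂ) :
    Matrix (Fin dA × Fin d) (Fin dA × Fin d) ℂ :=
  fun p q => ∑ g : Fin (N - 1) → Fin d, M (p.1, p.2, g) (q.1, q.2, g)

/-- Membership in `𝒮^N`: existence of a positive semidefinite Bose-symmetric
`N`-extension. -/
def MemSN (dA d N : ℕ) (Λ : Matrix (Fin dA × Fin d) (Fin dA × Fin d) ℂ) : Prop :=
  ∃ Λext : Matrix (ExtIdx dA d N) (ExtIdx dA d N) ℂ,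
    Λext.PosSemidef ∧ ptraceExt Λext = Λ ∧
    Λext * ((1 : Matrix (Fin dA) (Fin dA) ℂ) ⊗ₖ symProjB d N) = Λext

/-- Partial transpose of an operator on `ℋ_A ⊗ ℋ_B^{⊗N}` w.r.t. the bipartition
`(A and the first ⌈N/2⌉ copies of B) | (the last ⌊N/2⌋ copies of B)`.
Copy `0` of `B` is the explicit factor and the extra copy `i : Fin (N-1)` is copy
`i+1`; copy `j` is transposed iff `⌈N/2⌉ = (N+1)/2 ≤ j`. -/
def pt {dA d N : ℕ} (M : Matrix (ExtIdx dA d N) (ExtIdx dA d N) ℂ) :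
    Matrix (ExtIdx dA d N) (ExtIdx dA d N) ℂ :=
  fun p q =>
    M (p.1, p.2.1, fun i => if (N + 1) / 2 ≤ (i : ℕ) + 1 then q.2.2 i else p.2.2 i)
      (q.1, q.2.1, fun i => if (N + 1) / 2 ≤ (i : ℕ) + 1 then p.2.2 i else q.2.2 i)

/-- Membership in `𝒮_p^N`: existence of a positive semidefinite Bose-symmetric
`N`-extension which is moreover PPT w.r.t. the bipartition
`A B^{⌈N/2⌉} | B^{⌊N/2⌋}`. -/
def MemSNp (dA d N : ℕ) (Λ : Matrix (Fin dA × Fin d) (Fin dA × Fin d) ℂ) : Prop :=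
  ∃ Λext : Matrix (ExtIdx dA d N) (ExtIdx dA d N) ℂ,
    Λext.PosSemidef ∧ ptraceExt Λext = Λ ∧
    Λext * ((1 : Matrix (Fin dA) (Fin dA) ℂ) ⊗ₖ symProjB d N) = Λext ∧
    (pt Λext).PosSemidef

/-- Membership in `𝒮̃^N = {(N/(N+d)) σ + (1/(N+d)) σ_A ⊗ 𝕀_B : σ ∈ 𝒮^N}`. -/
def MemStildeN (dA d N : ℕ) (Λ : Matrix (Fin dA × Fin d) (Fin dA × Fin d) ℂ) : Prop :=
  ∃ σ, MemSN dA d N σ ∧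
    Λ = ((N : ℂ) / ((N : ℂ) + d)) • σ +
        (1 / ((N : ℂ) + d)) • (trB σ ⊗ₖ (1 : Matrix (Fin d) (Fin d) ℂ))

/-- The Jacobi polynomial `P_n^{(α,β)}` (for natural parameters `α, β`). -/
def jacobiP (n α β : ℕ) (x : ℝ) : ℝ :=
  ∑ s ∈ Finset.range (n + 1),
    (Nat.choose (n + α) (n - s) : ℝ) * (Nat.choose (n + β) s : ℝ) *
      ((x - 1) / 2) ^ s * ((x + 1) / 2) ^ (n - s)

/-- `ε_N = (d/(2(d-1))) · min {1 - x : P_{⌊N/2⌋+1}^{(d-2, N mod 2)}(x) = 0}`. -/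
def epsN (d N : ℕ) : ℝ :=
  ((d : ℝ) / (2 * ((d : ℝ) - 1))) *
    sInf {y : ℝ | ∃ x : ℝ, y = 1 - x ∧ jacobiP (N / 2 + 1) (d - 2) (N % 2) x = 0}

/-- Membership in `𝒮̃_p^N = {(1-ε_N) σ + ε_N σ_A ⊗ 𝕀_B/d : σ ∈ 𝒮_p^N}`. -/
def MemStildeNp (dA d N : ℕ) (Λ : Matrix (Fin dA × Fin d) (Fin dA × Fin d) ℂ) : Prop :=
  ∃ σ, MemSNp dA d N σ ∧
    Λ = ((1 : ℂ) - (epsN d N : ℂ)) • σ +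
        ((epsN d N : ℂ) / d) • (trB σ ⊗ₖ (1 : Matrix (Fin d) (Fin d) ℂ))

/-- The trace norm `‖Z‖₁ = tr √(Z Zᴴ)`. -/
def traceNorm {n : Type*} [Fintype n] [DecidableEq n] (Z : Matrix n n ℂ) : ℝ :=
  (((Matrix.posSemidef_self_mul_conjTranspose Z).1.eigenvectorUnitary.1 *
      diagonal (fun i => (((Matrix.posSemidef_self_mul_conjTranspose Z).1.eigenvalues i).sqrt : ℂ)) *
      (star (Matrix.posSemidef_self_mul_conjTranspose Z).1.eigenvectorUnitary : Matrix n n ℂ)).trace).re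

/-- The operator norm `‖Z‖_∞` (largest singular value), as the norm of the induced
operator on Euclidean space. -/
def opNorm {n : Type*} [Fintype n] [DecidableEq n] (Z : Matrix n n ℂ) : ℝ :=
  ‖LinearMap.toContinuousLinearMap (Matrix.toEuclideanLin Z)‖

/-- `(|φ⟩⟨φ|)^{⊗N}` on `ℋ_B^{⊗N} = ℋ_B ⊗ ℋ_B^{⊗(N-1)}`. -/
def projPowExt {d : ℕ} (N : ℕ) (φ : Fin d → ℂ) :
    Matrix (Fin d × (Fin (N - 1) → Fin d)) (Fin d × (Fin (N - 1) → Fin d)) ℂ :=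
  fun p q => proj φ p.1 q.1 * ∏ i, proj φ (p.2 i) (q.2 i)

/-- The optimal fidelity `F = sup {tr(ρ Λ) : Λ ∈ 𝒮, tr_B Λ = 𝕀_A}`. -/
def fid (dA d : ℕ) (ρ : Matrix (Fin dA × Fin d) (Fin dA × Fin d) ℂ) : ℝ :=
  sSup {r : ℝ | ∃ Λ, IsSeparable dA d Λ ∧ trB Λ = 1 ∧ r = ((ρ * Λ).trace).re}

/-- `F̃^N = sup {tr(ρ Λ) : Λ ∈ 𝒮̃^N, tr_B Λ = 𝕀_A}`. -/
def fidTildeN (dA d N : ℕ) (ρ : Matrix (Fin dA × Fin d) (Fin dA × Fin d) ℂ) : ℝ :=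
  sSup {r : ℝ | ∃ Λ, MemStildeN dA d N Λ ∧ trB Λ = 1 ∧ r = ((ρ * Λ).trace).re}

/-- `F̃_p^N = sup {tr(ρ Λ) : Λ ∈ 𝒮̃_p^N, tr_B Λ = 𝕀_A}`. -/
def fidTildeNp (dA d N : ℕ) (ρ : Matrix (Fin dA × Fin d) (Fin dA × Fin d) ℂ) : ℝ :=
  sSup {r : ℝ | ∃ Λ, MemStildeNp dA d N Λ ∧ trB Λ = 1 ∧ r = ((ρ * Λ).trace).re}

/-- Robustness relative to a set `T` of operators:
`R_T(ρ) = inf {tr σ : σ ∈ T, ρ + σ ∈ T}` (with `inf ∅ = +∞`). -/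
def rob {dA d : ℕ} (T : Set (Matrix (Fin dA × Fin d) (Fin dA × Fin d) ℂ))
    (ρ : Matrix (Fin dA × Fin d) (Fin dA × Fin d) ℂ) : ℝ≥0∞ :=
  sInf {t : ℝ≥0∞ | ∃ σ ∈ T, ρ + σ ∈ T ∧ t = ENNReal.ofReal ((σ.trace).re)}



/-! ### Auxiliary lemmas -/

section Aux
variable {n : Type*} [Fintype n] [DecidableEq n]
open scoped MatrixOrder

lemma trace_psd_re_nonneg {M : Matrix n n ℂ} (hM : M.PosSemidef) : 0 ≤ M.trace.re := by
  have h : ∀ i, 0 ≤ (M i i).re := fun i => by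
    have := hM.re_dotProduct_nonneg (Pi.single i 1)
    simpa [dotProduct, mulVec, Pi.single_apply] using this
  rw [Matrix.trace, Complex.re_sum]
  exact Finset.sum_nonneg fun i _ => h i

lemma trace_mul_psd_re_nonneg {A B : Matrix n n ℂ} (hA : A.PosSemidef) (hB : B.PosSemidef) :
    0 ≤ ((A*B).trace).re := by
  obtain ⟨C, hC⟩ := CStarAlgebra.nonneg_iff_eq_star_mul_self.mp (nonneg_iff_posSemidef.mpr hA)
  rw [star_eq_conjTranspose] at hC
  subst hC
  rw [show (Cᴴ * C * B).trace = (C * B * Cᴴ).trace from (Matrix.trace_mul_cycle C B Cᴴ).symm]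
  exact trace_psd_re_nonneg (hB.mul_mul_conjTranspose_same C)

lemma traceNorm_sub_le_of_psd {A B : Matrix n n ℂ} (hA : A.PosSemidef) (hB : B.PosSemidef) :
    traceNorm (A - B) ≤ A.trace.re + B.trace.re := by
  set X := A - B with hXdef
  have hX : X.IsHermitian := hA.1.sub hB.1
  set V : Matrix n n ℂ := (hX.eigenvectorUnitary : Matrix n n ℂ) with hVdef
  have hV1 : star V * V = 1 := by
    have := hX.eigenvectorUnitary.2
    rw [Matrix.mem_unitaryGroup_iff'] at this
    exact this
  have hV2 : V * star V = 1 := by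
    have := hX.eigenvectorUnitary.2
    rw [Matrix.mem_unitaryGroup_iff] at this
    exact this
  set Cm : (n → ℝ) → Matrix n n ℂ :=
    fun f => V * Matrix.diagonal (fun i => (f i : ℂ)) * star V with hCmdef
  have hcancel : ∀ t : Matrix n n ℂ, star V * (V * t) = t := fun t => by
    rw [← mul_assoc, hV1, one_mul]
  have hCmul : ∀ f g, Cm f * Cm g = Cm (fun i => f i * g i) := by
    intro f g
    simp only [hCmdef, mul_assoc]
    rw [hcancel]
    rw [← mul_assoc (Matrix.diagonal _), Matrix.diagonal_mul_diagonal]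
    push_cast
    ring_nf
  have hCpsd : ∀ f, (∀ i, 0 ≤ f i) → (Cm f).PosSemidef := by
    intro f hf
    have hd : PosSemidef (Matrix.diagonal (fun i => (f i : ℂ))) :=
      .diagonal fun i => show (0:ℂ) ≤ _ by exact_mod_cast hf i
    simpa [hCmdef, Matrix.star_eq_conjTranspose] using hd.mul_mul_conjTranspose_same V
  have hCtr : ∀ f, (Cm f).trace = ((∑ i, f i : ℝ) : ℂ) := by
    intro f
    rw [hCmdef]
    rw [Matrix.trace_mul_cycle, hV1, one_mul, Matrix.trace_diagonal]
    norm_cast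
  have hX_eq : X = Cm hX.eigenvalues := by
    simpa [hCmdef, hVdef, Function.comp_def] using hX.spectral_theorem
  set ev := hX.eigenvalues with hev
  have habs : traceNorm X = ∑ i, |ev i| := by
    have hsq : (Cm fun i => |ev i|) ^ 2 = X * Xᴴ := by
      rw [hX.eq, pow_two, hCmul, hX_eq, hCmul]
      have : (fun i => |ev i| * |ev i|) = fun i => ev i * ev i :=
        funext fun i => abs_mul_abs_self _
      rw [this]
    have hH := posSemidef_self_mul_conjTranspose X
    have : Cm (fun i => |ev i|) = (hH.1.eigenvectorUnitary.1 *
        diagonal (fun i => ((hH.1.eigenvalues i).sqrt : ℂ)) *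
        (star hH.1.eigenvectorUnitary : Matrix n n ℂ)) := by
      trans cfc Real.sqrt (X * Xᴴ)
      · rw [← cfcₙ_eq_cfc (hf0 := Real.sqrt_zero), ← CFC.sqrt_eq_real_sqrt _ (nonneg_iff_posSemidef.mpr hH)]
        exact (CFC.sqrt_unique (by rw [← pow_two]; exact hsq)
          (nonneg_iff_posSemidef.mpr (hCpsd _ fun i => abs_nonneg _))).symm
      · rw [hH.1.cfc_eq]
        simp [IsHermitian.cfc, Function.comp_def]
    rw [traceNorm, ← this, hCtr]
    simp
  set p : n → ℝ := fun i => if ev i < 0 then 1 else 0 with hp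
  have hPpsd : (Cm p).PosSemidef := hCpsd p fun i => by positivity
  have h1mP : (1 : Matrix n n ℂ) - Cm p = Cm (fun i => 1 - p i) := by
    have h1 : (1 : Matrix n n ℂ) = Cm (fun _ => (1:ℝ)) := by
      simp only [hCmdef]
      simp [Matrix.diagonal_one, hV2]
    rw [h1, hCmdef]
    simp only [← Matrix.sub_mul, ← Matrix.mul_sub]
    rw [Matrix.diagonal_sub]
    congr 1
    · congr 1
      ext i
      push_cast
      ring
  have h1mPpsd : ((1 : Matrix n n ℂ) - Cm p).PosSemidef := by
    rw [h1mP]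
    refine hCpsd _ fun i => ?_
    by_cases h : ev i < 0 <;> simp [hp, h]
  have htrPX : ((Cm p * X).trace).re = ∑ i, p i * ev i := by
    rw [hX_eq, hCmul, hCtr]
    simp
  have hPA : 0 ≤ ((Cm p * A).trace).re := trace_mul_psd_re_nonneg hPpsd hA
  have hPB : ((Cm p * B).trace).re ≤ B.trace.re := by
    have h0 : 0 ≤ ((((1 : Matrix n n ℂ) - Cm p) * B).trace).re :=
      trace_mul_psd_re_nonneg h1mPpsd hB
    rw [Matrix.sub_mul, Matrix.one_mul, Matrix.trace_sub, Complex.sub_re] at h0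
    linarith
  have hsplit : ((Cm p * X).trace).re = ((Cm p * A).trace).re - ((Cm p * B).trace).re := by
    rw [hXdef, Matrix.mul_sub, Matrix.trace_sub, Complex.sub_re]
  have hXtr : X.trace.re = (∑ i, ev i) := by
    rw [hX_eq, hCtr]; simp
  have hXtr' : X.trace.re = A.trace.re - B.trace.re := by
    rw [hXdef, Matrix.trace_sub, Complex.sub_re]
  set g : n → ℝ := fun i => max (-ev i) 0 with hg
  have hge : ∀ i, p i * ev i = -(g i) := by
    intro i
    by_cases h : ev i < 0
    · simp [hp, hg, h, max_eq_left (neg_nonneg.mpr h.le)]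
    · simp [hp, hg, h, max_eq_right (neg_nonpos.mpr (not_lt.1 h))]
  have hgsum : ∑ i, g i ≤ B.trace.re := by
    have : ∑ i, p i * ev i = -∑ i, g i := by
      rw [← Finset.sum_neg_distrib]
      exact Finset.sum_congr rfl fun i _ => hge i
    rw [this] at htrPX
    rw [hsplit] at htrPX
    linarith
  have habs2 : ∀ i, |ev i| = ev i + 2 * g i := by
    intro i
    by_cases h : ev i < 0
    · rw [abs_of_neg h, hg]
      simp [max_eq_left (neg_nonneg.mpr h.le)]
      ring
    · rw [abs_of_nonneg (not_lt.1 h), hg]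
      simp [max_eq_right (neg_nonpos.mpr (not_lt.1 h))]
  calc traceNorm X = ∑ i, |ev i| := habs
    _ = ∑ i, (ev i + 2 * g i) := Finset.sum_congr rfl fun i _ => habs2 i
    _ = (∑ i, ev i) + 2 * ∑ i, g i := by
        rw [Finset.sum_add_distrib, Finset.mul_sum]
    _ ≤ (A.trace.re - B.trace.re) + 2 * B.trace.re := by
        rw [← hXtr, hXtr']
        linarith
    _ = A.trace.re + B.trace.re := by ring

end Aux

section Aux2
open scoped MatrixOrder

lemma kron_conjT {m p q r : Type*} (A : Matrix m p ℂ) (B : Matrix q r ℂ) :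
    (A ⊗ₖ B)ᴴ = Aᴴ ⊗ₖ Bᴴ := by
  ext ⟨i, j⟩ ⟨k, l⟩
  simp [Matrix.conjTranspose_apply, Matrix.kroneckerMap_apply, mul_comm]

lemma proj_eq {m : Type*} (ψ : m → ℂ) :
    proj ψ = (Matrix.replicateRow Unit (star ψ))ᴴ * Matrix.replicateRow Unit (star ψ) := by
  rw [proj, Matrix.vecMulVec_eq Unit, Matrix.conjTranspose_replicateRow, star_star]

lemma kron_proj_psd {m q : Type*} [Fintype m] [Fintype q] (ψ : m → ℂ)
    {B : Matrix q q ℂ} (hB : B.PosSemidef) : (proj ψ ⊗ₖ B).PosSemidef := by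
  classical
  obtain ⟨D, hD⟩ := CStarAlgebra.nonneg_iff_eq_star_mul_self.mp (nonneg_iff_posSemidef.mpr hB)
  rw [star_eq_conjTranspose] at hD
  rw [proj_eq, hD, Matrix.mul_kronecker_mul, ← kron_conjT]
  exact Matrix.posSemidef_conjTranspose_mul_self _

lemma psd_smul {n : Type*} [Fintype n] {M : Matrix n n ℂ} (hM : M.PosSemidef)
    {c : ℝ} (hc : 0 ≤ c) : ((c : ℂ) • M).PosSemidef := by
  refine PosSemidef.of_dotProduct_mulVec_nonneg ?_ ?_
  · rw [Matrix.IsHermitian, Matrix.conjTranspose_smul, hM.1.eq]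
    congr 1
    simp
  · intro x
    rw [Matrix.smul_mulVec, dotProduct_smul]
    exact smul_nonneg (by exact_mod_cast hc) (hM.dotProduct_mulVec_nonneg x)

lemma psd_sum {n : Type*} [Fintype n] {k : ℕ} (f : Fin k → Matrix n n ℂ)
    (h : ∀ i, (f i).PosSemidef) : (∑ i, f i).PosSemidef :=
  Finset.sum_induction f _ (fun _ _ ha hb => ha.add hb) .zero (fun i _ => h i)

lemma psd_tsub {q : Type*} [Fintype q] [DecidableEq q] (φ : q → ℂ) :
    (((∑ b, Complex.normSq (φ b) : ℝ) : ℂ) • (1 : Matrix q q ℂ) - proj φ).PosSemidef := by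
  have hproj_herm : (proj φ)ᴴ = proj φ := by
    ext i j
    simp [proj, Matrix.conjTranspose_apply, Matrix.vecMulVec_apply, mul_comm]
  refine PosSemidef.of_dotProduct_mulVec_nonneg ?_ ?_
  · rw [Matrix.IsHermitian, Matrix.conjTranspose_sub, Matrix.conjTranspose_smul,
      Matrix.conjTranspose_one, hproj_herm]
    congr 1
    simp
  · intro x
    set s : ℂ := ∑ b, (starRingEnd ℂ) (φ b) * x b with hs
    have hform : star x ⬝ᵥ ((((∑ b, Complex.normSq (φ b) : ℝ) : ℂ) • (1 : Matrix q q ℂ)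
          - proj φ) *ᵥ x)
        = (((∑ b, Complex.normSq (φ b)) * (∑ b, Complex.normSq (x b))
            - Complex.normSq s : ℝ) : ℂ) := by
      rw [Matrix.sub_mulVec, Matrix.smul_mulVec, Matrix.one_mulVec, dotProduct_sub,
        dotProduct_smul]
      have h1 : star x ⬝ᵥ x = ((∑ b, Complex.normSq (x b) : ℝ) : ℂ) := by
        simp only [dotProduct, Pi.star_apply, RCLike.star_def]
        push_cast
        exact Finset.sum_congr rfl fun b _ => by rw [mul_comm, Complex.mul_conj]
      have h2 : star x ⬝ᵥ (proj φ *ᵥ x) = ((Complex.normSq s : ℝ) : ℂ) := by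
        have hexp : star x ⬝ᵥ (proj φ *ᵥ x) = (∑ b, (starRingEnd ℂ) (x b) * φ b) * s := by
          simp only [dotProduct, Matrix.mulVec, proj, Matrix.vecMulVec_apply, Pi.star_apply,
            Complex.star_def, hs, Finset.sum_mul, Finset.mul_sum]
          rw [Finset.sum_comm]
          exact Finset.sum_congr rfl fun b _ => Finset.sum_congr rfl fun b' _ => by ring
        have hconj : (∑ b, (starRingEnd ℂ) (x b) * φ b) = (starRingEnd ℂ) s := by
          rw [hs, map_sum]
          exact Finset.sum_congr rfl fun b _ => by simp [mul_comm]
        rw [hexp, hconj, mul_comm, Complex.mul_conj]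
      rw [h1, h2]
      push_cast
      simp only [smul_eq_mul]
    rw [hform]
    have hCS : Complex.normSq s ≤ (∑ b, Complex.normSq (φ b)) * (∑ b, Complex.normSq (x b)) := by
      set Φ : EuclideanSpace ℂ q := (WithLp.equiv 2 _).symm φ with hΦ
      set Xv : EuclideanSpace ℂ q := (WithLp.equiv 2 _).symm x with hX
      have hinner : (inner ℂ Φ Xv : ℂ) = s := by
        rw [hs, PiLp.inner_apply]
        exact Finset.sum_congr rfl fun b _ => by
          simp [hΦ, hX, RCLike.inner_apply, mul_comm]
      have hnφ : ‖Φ‖ ^ 2 = ∑ b, Complex.normSq (φ b) := by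
        rw [EuclideanSpace.norm_eq, Real.sq_sqrt (by positivity)]
        exact Finset.sum_congr rfl fun b _ => by
          simp [hΦ, Complex.sq_norm]
      have hnx : ‖Xv‖ ^ 2 = ∑ b, Complex.normSq (x b) := by
        rw [EuclideanSpace.norm_eq, Real.sq_sqrt (by positivity)]
        exact Finset.sum_congr rfl fun b _ => by
          simp [hX, Complex.sq_norm]
      have := norm_inner_le_norm (𝕜 := ℂ) Φ Xv
      have hsq := mul_self_le_mul_self (norm_nonneg _) this
      rw [hinner] at hsq
      calc Complex.normSq s = ‖s‖ * ‖s‖ := by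
            rw [← Complex.sq_norm]; ring
        _ ≤ (‖Φ‖ * ‖Xv‖) * (‖Φ‖ * ‖Xv‖) := hsq
        _ = ‖Φ‖ ^ 2 * ‖Xv‖ ^ 2 := by ring
        _ = _ := by rw [hnφ, hnx]
    have : (0:ℝ) ≤ (∑ b, Complex.normSq (φ b)) * (∑ b, Complex.normSq (x b))
        - Complex.normSq s := sub_nonneg.mpr hCS
    exact_mod_cast this

end Aux2

set_option maxHeartbeats 1000000 in
/-- for a separable state `ρ`,
`‖ρ - ρ_A ⊗ 𝕀_B/d‖₁ ≤ 2(d-1)/d`. -/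
theorem stmt4 (dA d : ℕ) (hdA : 1 ≤ dA) (hd : 1 ≤ d)
    (ρ : Matrix (Fin dA × Fin d) (Fin dA × Fin d) ℂ)
    (hρsep : IsSeparable dA d ρ) (hρtr : ρ.trace = 1) :
    traceNorm (ρ - (1 / (d : ℂ)) • (trB ρ ⊗ₖ (1 : Matrix (Fin d) (Fin d) ℂ))) ≤
      2 * ((d : ℝ) - 1) / d := by
  obtain ⟨k, c, ψ, φ, hc, hρ⟩ := hρsep
  have hd0 : (d : ℝ) ≠ 0 := Nat.cast_ne_zero.mpr (by omega)
  set τ : Fin k → ℝ := fun i => ∑ b, Complex.normSq (φ i b) with hτ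
  have hQdiag : ∀ i, (∑ b, proj (φ i) b b) = ((τ i : ℝ) : ℂ) := by
    intro i
    rw [hτ]
    push_cast
    exact Finset.sum_congr rfl fun b _ => by
      simp [proj, Matrix.vecMulVec_apply, Complex.mul_conj]
  set K : Matrix (Fin dA × Fin d) (Fin dA × Fin d) ℂ :=
    trB ρ ⊗ₖ (1 : Matrix (Fin d) (Fin d) ℂ) with hK
  have hdiff : K - ρ = ∑ i, (c i : ℂ) •
      (proj (ψ i) ⊗ₖ (((τ i : ℝ) : ℂ) • (1 : Matrix (Fin d) (Fin d) ℂ) - proj (φ i))) := by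
    ext ⟨a, b⟩ ⟨a', b'⟩
    simp only [hK, Matrix.sub_apply, Matrix.sum_apply, Matrix.smul_apply,
      Matrix.kroneckerMap_apply, hρ, trB, smul_eq_mul]
    rw [Finset.sum_comm, Finset.sum_mul, ← Finset.sum_sub_distrib]
    refine Finset.sum_congr rfl fun i _ => ?_
    have : (∑ b'' : Fin d, (c i : ℂ) * (proj (ψ i) a a' * proj (φ i) b'' b''))
        = (c i : ℂ) * (proj (ψ i) a a' * ((τ i : ℝ) : ℂ)) := by
      rw [← Finset.mul_sum, ← Finset.mul_sum, hQdiag i]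
    rw [this]
    ring
  have hproj_psd : ∀ {m : Type} [Fintype m] (v : m → ℂ), (proj v).PosSemidef := by
    intro m _ v
    rw [proj_eq]
    exact Matrix.posSemidef_conjTranspose_mul_self _
  have hρpsd : ρ.PosSemidef := by
    rw [hρ]
    exact psd_sum _ fun i => psd_smul (kron_proj_psd _ (hproj_psd (φ i))) (hc i)
  have hdiffpsd : (K - ρ).PosSemidef := by
    rw [hdiff]
    exact psd_sum _ fun i => psd_smul (kron_proj_psd _ (psd_tsub (φ i))) (hc i)
  set r : ℝ := 1 / (d : ℝ) with hr
  have hcast : (1 / (d : ℂ)) = ((r : ℝ) : ℂ) := by rw [hr]; push_cast; ring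
  have hXeq : ρ - (1 / (d : ℂ)) • K
      = (((1 - r : ℝ) : ℂ) • ρ) - (((r : ℝ) : ℂ) • (K - ρ)) := by
    rw [hcast]
    push_cast
    rw [smul_sub, sub_smul, one_smul]
    abel
  have hr0 : (0:ℝ) ≤ r := by rw [hr]; positivity
  have hr1 : (0:ℝ) ≤ 1 - r := by
    rw [hr, sub_nonneg]
    rw [div_le_one (by positivity)]
    exact_mod_cast hd
  have hbound := traceNorm_sub_le_of_psd (psd_smul hρpsd hr1) (psd_smul hdiffpsd hr0)
  rw [hXeq]
  refine le_trans hbound ?_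
  have htrB : (trB ρ).trace = ρ.trace := by
    rw [Matrix.trace, Matrix.trace, Fintype.sum_prod_type]
    rfl
  have hKtr : K.trace = (d : ℂ) := by
    rw [hK, Matrix.trace_kronecker, htrB, hρtr, Matrix.trace_one]
    simp
  have h1 : ((((1 - r : ℝ) : ℂ) • ρ).trace).re = 1 - r := by
    rw [Matrix.trace_smul, hρtr, smul_eq_mul, mul_one, Complex.ofReal_re]
  have h2 : ((((r : ℝ) : ℂ) • (K - ρ)).trace).re = r * ((d : ℝ) - 1) := by
    rw [Matrix.trace_smul, Matrix.trace_sub, hKtr, hρtr, smul_eq_mul]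
    have : ((r : ℝ) : ℂ) * ((d : ℂ) - 1) = ((r * ((d : ℝ) - 1) : ℝ) : ℂ) := by push_cast; ring
    rw [this, Complex.ofReal_re]
  rw [h1, h2, hr]
  have heq : 1 - 1/(d:ℝ) + 1/(d:ℝ) * ((d:ℝ) - 1) = 2 * ((d:ℝ) - 1) / (d:ℝ) := by
    field_simp
    ring
  exact le_of_eq heq

end SepPaper
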